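/- Let φ be the standard Gaussian cdf. For any fixed ε > 1, as M → ∞, φ(√(2 log M)·ε)^M = 1 − e^{−(ε²−1) log M}/(2√(π log M)·ε) · (1 + O(1/(log M·(ε²−1)))). In particular φ(√(2 log M)·ε)^M → 1 for ε > 1. -/

import Mathlib

set_option maxHeartbeats 1000000

open Real Filter Asymptotics MeasureTheory Set ProbabilityTheory

open Real Filter Asymptotics MeasureTheory Set ProbabilityTheory

lemma aux_exp_tendsto : Tendsto (fun x : ℝ => Real.exp (-x^2/2)) atTop (nhds 0) := by
  apply Real.tendsto_exp_atBot.comp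
  have h1 : Tendsto (fun x : ℝ => x^2) atTop atTop := tendsto_pow_atTop two_ne_zero
  have h2 : Tendsto (fun x : ℝ => -x^2) atTop atBot := tendsto_neg_atBot_iff.mpr h1
  exact h2.atBot_div_const two_pos

lemma aux_int_exp : Integrable (fun x : ℝ => Real.exp (-x^2/2)) := by
  have := integrable_exp_neg_mul_sq (b := (1/2 : ℝ)) (by norm_num)
  convert this using 2 with x
  ring_nf

lemma gauss_int1 (t : ℝ) : ∫ x in Ioi t, x * Real.exp (-x^2/2) = Real.exp (-t^2/2) := by
  have hint : IntegrableOn (fun x : ℝ => x * Real.exp (-x^2/2)) (Ioi t) := by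
    have := integrable_mul_exp_neg_mul_sq (b := (1/2 : ℝ)) (by norm_num)
    refine Integrable.integrableOn ?_
    convert this using 2 with x
    ring_nf
  have hderiv : ∀ x ∈ Ici t, HasDerivAt (fun y : ℝ => -Real.exp (-y^2/2))
      (x * Real.exp (-x^2/2)) x := by
    intro x _
    have h1 : HasDerivAt (fun y : ℝ => -y^2/2) (-x) x := by
      have := ((hasDerivAt_pow 2 x).neg).div_const 2
      exact this.congr_deriv (by push_cast; ring)
    have := (h1.exp).neg
    exact this.congr_deriv (by ring)
  have htend : Tendsto (fun y : ℝ => -Real.exp (-y^2/2)) atTop (nhds 0) := by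
    simpa using aux_exp_tendsto.neg
  have := integral_Ioi_of_hasDerivAt_of_tendsto' hderiv hint htend
  rw [this]; ring

open Real Filter Asymptotics MeasureTheory Set ProbabilityTheory


lemma aux_int2_integrable {t : ℝ} (ht : 0 < t) :
    IntegrableOn (fun x : ℝ => (1 - 3/x^4) * Real.exp (-x^2/2)) (Ioi t) := by
  refine Integrable.mono' ((aux_int_exp.integrableOn).const_mul (1 + 3/t^4)) ?_ ?_
  · refine (ContinuousOn.aestronglyMeasurable ?_ measurableSet_Ioi)
    refine ContinuousOn.mul ?_ (Continuous.continuousOn (by continuity))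
    refine ContinuousOn.sub continuousOn_const ?_
    refine ContinuousOn.div continuousOn_const (Continuous.continuousOn (by continuity)) ?_
    intro x hx
    have : (0:ℝ) < x := ht.trans hx
    positivity
  · filter_upwards [ae_restrict_mem measurableSet_Ioi] with x hx
    have hx0 : (0:ℝ) < x := ht.trans hx
    rw [norm_mul, norm_of_nonneg (Real.exp_nonneg _)]
    have h1 : |1 - 3/x^4| ≤ 1 + 3/t^4 := by
      rw [abs_sub_comm, abs_sub_le_iff]
      constructor
      · have : 3/x^4 ≤ 3/t^4 := by
          apply div_le_div_of_nonneg_left (by norm_num) (by positivity)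
          exact pow_le_pow_left₀ ht.le (le_of_lt hx) 4
        nlinarith
      · have : (0:ℝ) < 3/x^4 := by positivity
        nlinarith [div_nonneg (by norm_num : (0:ℝ) ≤ 3) (pow_nonneg ht.le 4)]
    calc |1 - 3/x^4| * Real.exp (-x^2/2) ≤ (1 + 3/t^4) * Real.exp (-x^2/2) := by
            exact mul_le_mul_of_nonneg_right h1 (Real.exp_nonneg _)
      _ = _ := rfl

lemma gauss_int2 {t : ℝ} (ht : 0 < t) :
    ∫ x in Ioi t, (1 - 3/x^4) * Real.exp (-x^2/2)
      = (1/t - 1/t^3) * Real.exp (-t^2/2) := by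
  have hderiv : ∀ x ∈ Ici t, HasDerivAt (fun y : ℝ => -((1/y - 1/y^3) * Real.exp (-y^2/2)))
      ((1 - 3/x^4) * Real.exp (-x^2/2)) x := by
    intro x hx
    have hx0 : (0:ℝ) < x := lt_of_lt_of_le ht hx
    have h1 : HasDerivAt (fun y : ℝ => 1/y - 1/y^3) (-(1/x^2) + 3/x^4) x := by
      have ha : HasDerivAt (fun y : ℝ => 1/y) (-(1/x^2)) x := by
        simpa [one_div] using (hasDerivAt_inv hx0.ne')
      have hb : HasDerivAt (fun y : ℝ => 1/y^3) (-(3/x^4)) x := by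
        have := (hasDerivAt_pow 3 x).inv (by positivity)
        rw [show (fun y : ℝ => 1/y^3) = (fun x => x^3)⁻¹ by ext y; simp [one_div]]
        exact this.congr_deriv (by push_cast; field_simp)
      exact (ha.sub hb).congr_deriv (by ring)
    have h2 : HasDerivAt (fun y : ℝ => Real.exp (-y^2/2)) (-x * Real.exp (-x^2/2)) x := by
      have hq : HasDerivAt (fun y : ℝ => -y^2/2) (-x) x := by
        have := ((hasDerivAt_pow 2 x).neg).div_const 2
        exact this.congr_deriv (by push_cast; ring)
      simpa [mul_comm] using hq.exp
    have := (h1.mul h2).neg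
    refine this.congr_deriv ?_
    have hx2 : x^2 ≠ 0 := by positivity
    field_simp
    ring
  have htend : Tendsto (fun y : ℝ => -((1/y - 1/y^3) * Real.exp (-y^2/2))) atTop (nhds 0) := by
    have h1 : Tendsto (fun y : ℝ => 1/y - 1/y^3) atTop (nhds 0) := by
      have ha : Tendsto (fun y : ℝ => 1/y) atTop (nhds 0) := by
        simpa [one_div, Pi.inv_def] using (tendsto_id (α := ℝ)).inv_tendsto_atTop
      have h3 : Tendsto (fun y : ℝ => 1/y^3) atTop (nhds 0) := by
        simpa [one_div, Pi.inv_def] using ((tendsto_pow_atTop (n := 3) (by norm_num)).inv_tendsto_atTop (α := ℝ))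
      simpa using ha.sub h3
    have := (h1.mul aux_exp_tendsto).neg
    simpa using this
  have := integral_Ioi_of_hasDerivAt_of_tendsto' hderiv (aux_int2_integrable ht) htend
  rw [this]; ring


/-- The standard Gaussian cumulative distribution function. -/
noncomputable def stdGaussCdf (x : ℝ) : ℝ :=
  (ProbabilityTheory.cdf (ProbabilityTheory.gaussianReal 0 1)) x

open Real Filter Asymptotics MeasureTheory Set ProbabilityTheory



lemma pdf01 (x : ℝ) :
    gaussianPDFReal 0 1 x = (Real.sqrt (2*π))⁻¹ * Real.exp (-x^2/2) := by
  rw [gaussianPDFReal]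
  norm_num

lemma tail_le {t : ℝ} (ht : 0 < t) :
    ∫ x in Ioi t, gaussianPDFReal 0 1 x ≤ gaussianPDFReal 0 1 t / t := by
  have hc : (0:ℝ) < (Real.sqrt (2*π))⁻¹ := by positivity
  have hint1 : IntegrableOn (fun x : ℝ => gaussianPDFReal 0 1 x) (Ioi t) :=
    (integrable_gaussianPDFReal 0 1).integrableOn
  have hintx : IntegrableOn (fun x : ℝ => x * Real.exp (-x^2/2)) (Ioi t) := by
    refine Integrable.integrableOn ?_
    have := integrable_mul_exp_neg_mul_sq (b := (1/2 : ℝ)) (by norm_num)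
    convert this using 2 with x
    ring_nf
  have hint2 : IntegrableOn
      (fun x : ℝ => (x/t) * gaussianPDFReal 0 1 x) (Ioi t) := by
    have : (fun x : ℝ => (x/t) * gaussianPDFReal 0 1 x)
        = fun x : ℝ => ((Real.sqrt (2*π))⁻¹ / t) * (x * Real.exp (-x^2/2)) := by
      ext x; rw [pdf01]; ring
    rw [this]
    exact hintx.const_mul _
  have hmono : ∫ x in Ioi t, gaussianPDFReal 0 1 x
      ≤ ∫ x in Ioi t, (x/t) * gaussianPDFReal 0 1 x := by
    refine setIntegral_mono_on hint1 hint2 measurableSet_Ioi ?_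
    intro x hx
    have hx1 : 1 ≤ x/t := (one_le_div ht).mpr (le_of_lt hx)
    nlinarith [gaussianPDFReal_nonneg 0 1 x]
  have heq : ∫ x in Ioi t, (x/t) * gaussianPDFReal 0 1 x
      = gaussianPDFReal 0 1 t / t := by
    have : (fun x : ℝ => (x/t) * gaussianPDFReal 0 1 x)
        = fun x : ℝ => ((Real.sqrt (2*π))⁻¹ / t) * (x * Real.exp (-x^2/2)) := by
      ext x; rw [pdf01]; ring
    rw [this, integral_const_mul, gauss_int1, pdf01]
    field_simp
  linarith [hmono, heq.le, heq.ge]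

lemma tail_ge {t : ℝ} (ht : 0 < t) :
    gaussianPDFReal 0 1 t / t - gaussianPDFReal 0 1 t / t^3
      ≤ ∫ x in Ioi t, gaussianPDFReal 0 1 x := by
  have hint1 : IntegrableOn (fun x : ℝ => gaussianPDFReal 0 1 x) (Ioi t) :=
    (integrable_gaussianPDFReal 0 1).integrableOn
  have hint2 : IntegrableOn
      (fun x : ℝ => (Real.sqrt (2*π))⁻¹ * ((1 - 3/x^4) * Real.exp (-x^2/2))) (Ioi t) :=
    (aux_int2_integrable ht).const_mul _
  have hmono : ∫ x in Ioi t, (Real.sqrt (2*π))⁻¹ * ((1 - 3/x^4) * Real.exp (-x^2/2))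
      ≤ ∫ x in Ioi t, gaussianPDFReal 0 1 x := by
    refine setIntegral_mono_on hint2 hint1 measurableSet_Ioi ?_
    intro x hx
    have hx0 : (0:ℝ) < x := ht.trans hx
    rw [pdf01]
    have h1 : (1 : ℝ) - 3/x^4 ≤ 1 := by
      have : (0:ℝ) < 3/x^4 := by positivity
      linarith
    have h2 : (0:ℝ) ≤ Real.exp (-x^2/2) := Real.exp_nonneg _
    have hc : (0:ℝ) ≤ (Real.sqrt (2*π))⁻¹ := by positivity
    have h3 : (1 - 3/x^4) * Real.exp (-x^2/2) ≤ Real.exp (-x^2/2) := by nlinarith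
    exact mul_le_mul_of_nonneg_left h3 hc
  have heq : ∫ x in Ioi t, (Real.sqrt (2*π))⁻¹ * ((1 - 3/x^4) * Real.exp (-x^2/2))
      = gaussianPDFReal 0 1 t / t - gaussianPDFReal 0 1 t / t^3 := by
    rw [integral_const_mul, gauss_int2 ht, pdf01]
    field_simp
  linarith [hmono, heq.le]

lemma cdf_eq_one_sub (t : ℝ) :
    stdGaussCdf t = 1 - ∫ x in Ioi t, gaussianPDFReal 0 1 x := by
  have h1 : stdGaussCdf t = ∫ x in Iic t, gaussianPDFReal 0 1 x := by
    rw [stdGaussCdf, ProbabilityTheory.cdf_eq_real, measureReal_def,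
      ProbabilityTheory.gaussianReal_apply_eq_integral 0 one_ne_zero,
      ENNReal.toReal_ofReal]
    exact setIntegral_nonneg measurableSet_Iic fun x _ => gaussianPDFReal_nonneg 0 1 x
  have h2 : (∫ x in Iic t, gaussianPDFReal 0 1 x) + ∫ x in Ioi t, gaussianPDFReal 0 1 x
      = ∫ x, gaussianPDFReal 0 1 x :=
    intervalIntegral.integral_Iic_add_Ioi (integrable_gaussianPDFReal 0 1).integrableOn
      (integrable_gaussianPDFReal 0 1).integrableOn
  rw [integral_gaussianPDFReal_eq_one 0 one_ne_zero] at h2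
  rw [h1]; linarith





lemma exp_neg_le_quad {x : ℝ} (hx : 0 ≤ x) : Real.exp (-x) ≤ 1 - x + x^2 := by
  have h1 : Real.exp (-x) * (1 + x) ≤ 1 := by
    calc Real.exp (-x) * (1 + x) ≤ Real.exp (-x) * Real.exp x := by
          have := Real.add_one_le_exp x
          exact mul_le_mul_of_nonneg_left (by linarith) (Real.exp_nonneg _)
      _ = 1 := by rw [← Real.exp_add]; simp
  nlinarith [Real.exp_nonneg (-x)]

lemma self_mul_exp_neg_le_one {x : ℝ} (hx : 0 ≤ x) : x * Real.exp (-x) ≤ 1 := by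
  rw [Real.exp_neg, ← div_eq_mul_inv, div_le_one (Real.exp_pos x)]
  linarith [Real.add_one_le_exp x]

/-- for fixed `ε > 1`, as `M → ∞`,
`φ(√(2 log M)·ε)^M = 1 − e^{−(ε²−1) log M}/(2√(π log M)·ε) · (1 + O(1/(log M·(ε²−1))))`;
in particular `φ(√(2 log M)·ε)^M → 1`. -/
theorem stmt3 (ε : ℝ) (hε : 1 < ε) :
    ((fun M : ℕ =>
        (stdGaussCdf (Real.sqrt (2 * Real.log M) * ε)) ^ M -
          (1 - Real.exp (-(ε ^ 2 - 1) * Real.log M) /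
            (2 * Real.sqrt (Real.pi * Real.log M) * ε)))
      =O[atTop] fun M : ℕ =>
        (Real.exp (-(ε ^ 2 - 1) * Real.log M) /
            (2 * Real.sqrt (Real.pi * Real.log M) * ε)) *
          (1 / (Real.log M * (ε ^ 2 - 1)))) ∧
    Tendsto (fun M : ℕ => (stdGaussCdf (Real.sqrt (2 * Real.log M) * ε)) ^ M)
      atTop (nhds 1) := by
  have hε0 : 0 < ε := by linarith
  have hεs : 0 < ε^2 - 1 := by nlinarith
  -- key per-M estimates
  have key : ∀ M : ℕ, 3 ≤ M →
      (0 ≤ (stdGaussCdf (Real.sqrt (2 * Real.log M) * ε)) ^ M -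
            (1 - Real.exp (-(ε ^ 2 - 1) * Real.log M) /
              (2 * Real.sqrt (Real.pi * Real.log M) * ε))) ∧
      ((stdGaussCdf (Real.sqrt (2 * Real.log M) * ε)) ^ M -
            (1 - Real.exp (-(ε ^ 2 - 1) * Real.log M) /
              (2 * Real.sqrt (Real.pi * Real.log M) * ε))
          ≤ 2 * ((Real.exp (-(ε ^ 2 - 1) * Real.log M) /
              (2 * Real.sqrt (Real.pi * Real.log M) * ε)) *
            (1 / (Real.log M * (ε ^ 2 - 1))))) ∧
      (0 ≤ (Real.exp (-(ε ^ 2 - 1) * Real.log M) /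
              (2 * Real.sqrt (Real.pi * Real.log M) * ε)) *
            (1 / (Real.log M * (ε ^ 2 - 1)))) ∧
      (1 - 1 / (Real.log M * (ε ^ 2 - 1))
          ≤ (stdGaussCdf (Real.sqrt (2 * Real.log M) * ε)) ^ M) ∧
      ((stdGaussCdf (Real.sqrt (2 * Real.log M) * ε)) ^ M
          ≤ 1 + 2 * (1 / (Real.log M * (ε ^ 2 - 1)))^2) := by
    intro M hM
    have hM3 : (3:ℝ) ≤ (M:ℝ) := by exact_mod_cast hM
    have hM0 : (0:ℝ) < (M:ℝ) := by linarith
    set L : ℝ := Real.log M with hLdef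
    have hL : 1 ≤ L := by
      have h3 : (1:ℝ) ≤ Real.log 3 := by
        rw [Real.le_log_iff_exp_le (by norm_num)]
        have := Real.exp_one_lt_d9
        calc Real.exp 1 ≤ 2.7182818286 := this.le
          _ ≤ 3 := by norm_num
      calc (1:ℝ) ≤ Real.log 3 := h3
        _ ≤ L := Real.log_le_log (by norm_num) hM3
    have hL0 : 0 < L := by linarith
    set t : ℝ := Real.sqrt (2 * L) * ε with htdef
    have ht : 0 < t := mul_pos (Real.sqrt_pos.mpr (by linarith)) hε0
    have ht2 : t^2 = 2 * L * ε^2 := by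
      rw [htdef, mul_pow, Real.sq_sqrt (by linarith : (0:ℝ) ≤ 2 * L)]
    set Q : ℝ := ∫ x in Ioi t, gaussianPDFReal 0 1 x with hQdef
    have hcdf : stdGaussCdf t = 1 - Q := cdf_eq_one_sub t
    have hQ0 : 0 ≤ Q :=
      setIntegral_nonneg measurableSet_Ioi fun x _ => gaussianPDFReal_nonneg 0 1 x
    have hQ1 : Q ≤ 1 := by
      have := ProbabilityTheory.cdf_nonneg (ProbabilityTheory.gaussianReal 0 1) t
      rw [← stdGaussCdf, hcdf] at this; linarith
    set g : ℝ := gaussianPDFReal 0 1 t with hgdef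
    have hg0 : 0 ≤ g := gaussianPDFReal_nonneg 0 1 t
    -- the main quantity A
    set A : ℝ := Real.exp (-(ε ^ 2 - 1) * L) / (2 * Real.sqrt (π * L) * ε) with hAdef
    have hsqrtPL : (1:ℝ) ≤ Real.sqrt (π * L) := by
      rw [show (1:ℝ) = Real.sqrt 1 by simp]
      exact Real.sqrt_le_sqrt (by nlinarith [Real.pi_gt_three])
    have hden : (0:ℝ) < 2 * Real.sqrt (π * L) * ε := by positivity
    have hA0 : 0 ≤ A := by positivity
    -- sqrt identity
    have hsq : Real.sqrt (2*π) * Real.sqrt (2*L) = 2 * Real.sqrt (π * L) := by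
      rw [← Real.sqrt_mul (by positivity), show (2*π) * (2*L) = 4 * (π * L) by ring,
        Real.sqrt_mul (by norm_num),
        show Real.sqrt 4 = 2 by
          rw [show (4:ℝ) = 2^2 by norm_num, Real.sqrt_sq (by norm_num : (0:ℝ) ≤ 2)]]
    -- g/t
    have hgt : g / t = Real.exp (-(ε^2 * L)) / (2 * Real.sqrt (π * L) * ε) := by
      rw [hgdef, pdf01, show -t^2/2 = -(ε^2 * L) by rw [ht2]; ring, htdef]
      rw [← hsq]
      have hs : (0:ℝ) < Real.sqrt (2*π) := by positivity
      have hu : (0:ℝ) < Real.sqrt (2*L) := Real.sqrt_pos.mpr (by linarith)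
      field_simp
    have hexp : Real.exp L = M := Real.exp_log hM0
    have hA : A = M * (g / t) := by
      rw [hgt, hAdef, ← hexp, ← mul_div_assoc, ← Real.exp_add]
      congr 1
      ring
    have hMQ : (M:ℝ) * Q ≤ A := by
      rw [hA]
      exact mul_le_mul_of_nonneg_left (tail_le ht) (Nat.cast_nonneg M)
    have hAMQ : A - (M:ℝ) * Q ≤ (M:ℝ) * (g / t^3) := by
      rw [hA, ← mul_sub]
      refine mul_le_mul_of_nonneg_left ?_ (Nat.cast_nonneg M)
      linarith [tail_ge ht]
    have hgt3 : (M:ℝ) * (g / t^3) = A / (2 * L * ε^2) := by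
      rw [← ht2, hA, mul_div_assoc]
      congr 1
      rw [div_div]
      congr 1
      ring
    -- A * (L * (ε²-1)) ≤ 1
    have hALe : A * (L * (ε^2 - 1)) ≤ 1 := by
      have hx : 0 ≤ (ε^2 - 1) * L := by positivity
      have h1 : ((ε^2-1) * L) * Real.exp (-((ε^2-1) * L)) ≤ 1 := self_mul_exp_neg_le_one hx
      have h2 : A * (L * (ε^2 - 1))
          = (((ε^2-1) * L) * Real.exp (-((ε^2-1) * L))) / (2 * Real.sqrt (π * L) * ε) := by
        rw [hAdef, div_mul_eq_mul_div, show -(ε ^ 2 - 1) * L = -((ε^2-1)*L) by ring]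
        congr 1
        ring
      rw [h2, div_le_one hden]
      calc ((ε^2-1) * L) * Real.exp (-((ε^2-1) * L)) ≤ 1 := h1
        _ ≤ 2 * Real.sqrt (π * L) * ε := by nlinarith
    set B : ℝ := 1 / (L * (ε^2 - 1)) with hBdef
    have hB0 : 0 < B := by positivity
    have hAB : A ≤ B := by
      rw [hBdef, le_div_iff₀ (by positivity)]
      exact hALe
    -- power bounds
    have hlow : 1 - (M:ℝ) * Q ≤ (1 - Q)^M := by
      have := one_add_mul_le_pow (a := -Q) (by linarith) M
      simpa [sub_eq_add_neg, mul_comm] using this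
    have hup : (1 - Q)^M ≤ 1 - (M:ℝ) * Q + ((M:ℝ) * Q)^2 := by
      have h1 : (1 - Q)^M ≤ (Real.exp (-Q))^M := by
        refine pow_le_pow_left₀ (by linarith) ?_ M
        linarith [Real.add_one_le_exp (-Q)]
      have h2 : (Real.exp (-Q))^M = Real.exp (-((M:ℝ) * Q)) := by
        rw [← Real.exp_nat_mul]; ring_nf
      have h3 : Real.exp (-((M:ℝ) * Q)) ≤ 1 - (M:ℝ)*Q + ((M:ℝ)*Q)^2 :=
        exp_neg_le_quad (mul_nonneg (Nat.cast_nonneg M) hQ0)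
      calc (1 - Q)^M ≤ (Real.exp (-Q))^M := h1
        _ = Real.exp (-((M:ℝ) * Q)) := h2
        _ ≤ _ := h3
    have hMQ0 : 0 ≤ (M:ℝ) * Q := mul_nonneg (Nat.cast_nonneg M) hQ0
    have hMQsq : ((M:ℝ) * Q)^2 ≤ A^2 := by nlinarith
    -- combine
    have hf : stdGaussCdf t ^ M - (1 - A) = (1 - Q)^M - (1 - A) := by rw [hcdf]
    have hlower : 0 ≤ stdGaussCdf t ^ M - (1 - A) := by
      rw [hf]; linarith
    have hASq : A^2 ≤ A * B := by nlinarith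
    have hAt2 : A / (2 * L * ε^2) ≤ A * B := by
      rw [hBdef, mul_one_div]
      apply div_le_div_of_nonneg_left hA0 (by positivity)
      nlinarith
    have hupper : stdGaussCdf t ^ M - (1 - A) ≤ 2 * (A * B) := by
      rw [hf]
      have : (1-Q)^M - (1 - A) ≤ ((M:ℝ)*Q)^2 + (A - (M:ℝ)*Q) := by linarith
      have h2 : A - (M:ℝ)*Q ≤ A / (2 * L * ε^2) := by rw [← hgt3]; exact hAMQ
      linarith
    have hAB0 : 0 ≤ A * B := by positivity
    refine ⟨hlower, hupper, hAB0, ?_, ?_⟩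
    · have h1 : 1 - A ≤ stdGaussCdf t ^ M := by linarith
      have : 1 - B ≤ 1 - A := by linarith
      linarith
    · have h2 : stdGaussCdf t ^ M ≤ 1 - A + 2 * (A * B) := by linarith
      have h3 : A * B ≤ B^2 := by nlinarith
      nlinarith
  -- B tends to 0
  have hBtend : Tendsto (fun M : ℕ => 1 / (Real.log M * (ε^2 - 1))) atTop (nhds 0) := by
    have hlog : Tendsto (fun M : ℕ => Real.log M) atTop atTop :=
      Real.tendsto_log_atTop.comp tendsto_natCast_atTop_atTop
    have h := (hlog.atTop_mul_const hεs).inv_tendsto_atTop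
    have heq : (fun M : ℕ => 1 / (Real.log M * (ε^2 - 1)))
        = (fun M : ℕ => Real.log M * (ε^2 - 1))⁻¹ := by
      funext M; simp [one_div]
    rw [heq]
    exact h
  constructor
  · rw [isBigO_iff]
    refine ⟨2, ?_⟩
    filter_upwards [eventually_ge_atTop 3] with M hM
    obtain ⟨h0, h2, h3, _, _⟩ := key M hM
    rw [Real.norm_eq_abs, Real.norm_eq_abs, abs_of_nonneg h0, abs_of_nonneg h3]
    exact h2
  · refine tendsto_of_tendsto_of_tendsto_of_le_of_le'
      (g := fun M : ℕ => 1 - 1 / (Real.log M * (ε^2 - 1)))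
      (h := fun M : ℕ => 1 + 2 * (1 / (Real.log M * (ε^2 - 1)))^2) ?_ ?_ ?_ ?_
    · simpa using (tendsto_const_nhds (x := (1:ℝ)) (f := atTop)).sub hBtend
    · have := (tendsto_const_nhds (x := (1:ℝ)) (f := atTop)).add
        (((hBtend.pow 2)).const_mul 2)
      simpa using this
    · filter_upwards [eventually_ge_atTop 3] with M hM
      exact (key M hM).2.2.2.1
    · filter_upwards [eventually_ge_atTop 3] with M hM
      exact (key M hM).2.2.2.2
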